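/- (Hindsight representation of the Q-function; core identity in the proof of Theorem A.1.) Let r : S → ℝ be a reward function depending only on the entered state, and for s ∈ S, a ∈ A define Q(s,a) := Σ_{k=0}^∞ γ^k · Σ_{s'∈S} Pa_{k+1}(s,a,s')·r(s'); this series converges absolutely. If π(s,a) > 0, then Q(s,a) = Σ_{k=0}^∞ γ^k · Σ_{s'∈S} P_{k+1}(s,s') · (h_{k+1}(a|s,s') / π(s,a)) · r(s'), and this series also converges absolutely. -/

import Mathlib

open Finset

noncomputable section
open scoped Classical

/-- n-step state probabilities induced by a policy `π` and a transition kernel `p`: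
`Pn 0 s s' = [s' = s]` and `Pn (n+1) s s' = ∑ a, π s a * ∑ s'', p s a s'' * Pn n s'' s'`. -/
def Pn {S A : Type*} [Fintype S] [Fintype A] (p : S → A → S → ℝ) (π : S → A → ℝ) :
    ℕ → S → S → ℝ
  | 0, s, s' => if s' = s then 1 else 0
  | n + 1, s, s' => ∑ a, π s a * ∑ s'', p s a s'' * Pn p π n s'' s'

/-- Action-conditioned n-step probabilities, defined for indices `n ≥ 1` by
`Pa (n+1) s a s' = ∑ s'', p s a s'' * Pn n s'' s'` (the value at `n = 0` is irrelevant). -/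
def Pa {S A : Type*} [Fintype S] [Fintype A] (p : S → A → S → ℝ) (π : S → A → ℝ) :
    ℕ → S → A → S → ℝ
  | 0, _, _, _ => 0
  | n + 1, s, a, s' => ∑ s'', p s a s'' * Pn p π n s'' s'

/-- Hindsight probability `h_n(a | s, s')`. -/
def hca {S A : Type*} [Fintype S] [Fintype A] (p : S → A → S → ℝ) (π : S → A → ℝ)
    (n : ℕ) (a : A) (s s' : S) : ℝ :=
  if 0 < Pn p π n s s' then π s a * Pa p π n s a s' / Pn p π n s s' else 0

lemma Pn_nonneg {S A : Type*} [Fintype S] [Fintype A] (p : S → A → S → ℝ) (π : S → A → ℝ)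
    (hp0 : ∀ s a s', 0 ≤ p s a s') (hπ0 : ∀ s a, 0 ≤ π s a) :
    ∀ n s s', 0 ≤ Pn p π n s s' := by
  intro n
  induction n with
  | zero => intro s s'; simp [Pn]; split <;> norm_num
  | succ n ih =>
    intro s s'
    apply Finset.sum_nonneg
    intro a _
    exact mul_nonneg (hπ0 s a) (Finset.sum_nonneg fun s'' _ =>
      mul_nonneg (hp0 s a s'') (ih s'' s'))

lemma Pn_le_one {S A : Type*} [Fintype S] [Fintype A] (p : S → A → S → ℝ) (π : S → A → ℝ)
    (hp0 : ∀ s a s', 0 ≤ p s a s') (hp1 : ∀ s a, ∑ s', p s a s' = 1)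
    (hπ0 : ∀ s a, 0 ≤ π s a) (hπ1 : ∀ s, ∑ a, π s a = 1) :
    ∀ n s s', Pn p π n s s' ≤ 1 := by
  intro n
  induction n with
  | zero => intro s s'; simp [Pn]; split <;> norm_num
  | succ n ih =>
    intro s s'
    show ∑ a, π s a * ∑ s'', p s a s'' * Pn p π n s'' s' ≤ 1
    calc ∑ a, π s a * ∑ s'', p s a s'' * Pn p π n s'' s'
        ≤ ∑ a, π s a * 1 := by
          apply Finset.sum_le_sum
          intro a _
          apply mul_le_mul_of_nonneg_left _ (hπ0 s a)
          calc ∑ s'', p s a s'' * Pn p π n s'' s'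
              ≤ ∑ s'', p s a s'' * 1 := Finset.sum_le_sum fun s'' _ =>
                mul_le_mul_of_nonneg_left (ih s'' s') (hp0 s a s'')
            _ = 1 := by simp [hp1 s a]
      _ = 1 := by simp [hπ1 s]

lemma Pa_nonneg {S A : Type*} [Fintype S] [Fintype A] (p : S → A → S → ℝ) (π : S → A → ℝ)
    (hp0 : ∀ s a s', 0 ≤ p s a s') (hπ0 : ∀ s a, 0 ≤ π s a) (n : ℕ) (s : S) (a : A) (s' : S) :
    0 ≤ Pa p π n s a s' := by
  cases n with
  | zero => simp [Pa]
  | succ n =>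
    exact Finset.sum_nonneg fun s'' _ =>
      mul_nonneg (hp0 s a s'') (Pn_nonneg p π hp0 hπ0 n s'' s')

lemma Pa_le_one {S A : Type*} [Fintype S] [Fintype A] (p : S → A → S → ℝ) (π : S → A → ℝ)
    (hp0 : ∀ s a s', 0 ≤ p s a s') (hp1 : ∀ s a, ∑ s', p s a s' = 1)
    (hπ0 : ∀ s a, 0 ≤ π s a) (hπ1 : ∀ s, ∑ a, π s a = 1)
    (n : ℕ) (s : S) (a : A) (s' : S) : Pa p π n s a s' ≤ 1 := by
  cases n with
  | zero => simp [Pa]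
  | succ n =>
    show ∑ s'', p s a s'' * Pn p π n s'' s' ≤ 1
    calc ∑ s'', p s a s'' * Pn p π n s'' s'
        ≤ ∑ s'', p s a s'' * 1 := Finset.sum_le_sum fun s'' _ =>
          mul_le_mul_of_nonneg_left (Pn_le_one p π hp0 hp1 hπ0 hπ1 n s'' s') (hp0 s a s'')
      _ = 1 := by simp [hp1 s a]

lemma Pn_succ_eq_sum_Pa {S A : Type*} [Fintype S] [Fintype A] (p : S → A → S → ℝ)
    (π : S → A → ℝ) (n : ℕ) (s s' : S) :
    Pn p π (n + 1) s s' = ∑ a, π s a * Pa p π (n + 1) s a s' := rfl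

lemma hindsight_pointwise {S A : Type*} [Fintype S] [Fintype A] (p : S → A → S → ℝ)
    (π : S → A → ℝ) (hp0 : ∀ s a s', 0 ≤ p s a s') (hπ0 : ∀ s a, 0 ≤ π s a)
    (k : ℕ) (s : S) (a : A) (s' : S) (hπa : 0 < π s a) :
    Pn p π (k + 1) s s' * (hca p π (k + 1) a s s' / π s a) = Pa p π (k + 1) s a s' := by
  unfold hca
  by_cases h : 0 < Pn p π (k + 1) s s'
  · rw [if_pos h]
    field_simp
  · rw [if_neg h]
    have h0 : Pn p π (k + 1) s s' = 0 :=
      le_antisymm (not_lt.mp h) (Pn_nonneg p π hp0 hπ0 _ s s')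
    have : ∑ b, π s b * Pa p π (k + 1) s b s' = 0 := by
      rw [← Pn_succ_eq_sum_Pa]; exact h0
    have hz := (Finset.sum_eq_zero_iff_of_nonneg (fun b _ =>
      mul_nonneg (hπ0 s b) (Pa_nonneg p π hp0 hπ0 _ s b s'))).mp this a (Finset.mem_univ a)
    have : Pa p π (k + 1) s a s' = 0 := by
      rcases mul_eq_zero.mp hz with h1 | h2
      · exact absurd h1 (ne_of_gt hπa)
      · exact h2
    simp [this]

/-- hindsight representation of the Q-function.  With rewards depending
only on the entered state, the series defining `Q(s,a)` converges absolutely, and when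
`π(s,a) > 0` it equals the hindsight-weighted series, which also converges absolutely. -/
theorem hindsight_Q_representation
    {S A : Type*} [Fintype S] [Fintype A] [Nonempty S] [Nonempty A]
    (p : S → A → S → ℝ) (π : S → A → ℝ)
    (hp0 : ∀ s a s', 0 ≤ p s a s') (hp1 : ∀ s a, ∑ s', p s a s' = 1)
    (hπ0 : ∀ s a, 0 ≤ π s a) (hπ1 : ∀ s, ∑ a, π s a = 1)
    (γ : ℝ) (hγ0 : 0 ≤ γ) (hγ1 : γ < 1) (r : S → ℝ) (s : S) (a : A) :
    Summable (fun k : ℕ => |γ ^ k * ∑ s', Pa p π (k + 1) s a s' * r s'|) ∧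
    (0 < π s a →
      Summable (fun k : ℕ =>
        |γ ^ k * ∑ s', Pn p π (k + 1) s s' * (hca p π (k + 1) a s s' / π s a) * r s'|) ∧
      (∑' k : ℕ, γ ^ k * ∑ s', Pa p π (k + 1) s a s' * r s') =
        ∑' k : ℕ, γ ^ k *
          ∑ s', Pn p π (k + 1) s s' * (hca p π (k + 1) a s s' / π s a) * r s') := by
  have hbound : ∀ k : ℕ, |γ ^ k * ∑ s', Pa p π (k + 1) s a s' * r s'|
      ≤ γ ^ k * ∑ s', |r s'| := by
    intro k
    rw [abs_mul, abs_pow, abs_of_nonneg hγ0]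
    apply mul_le_mul_of_nonneg_left _ (pow_nonneg hγ0 k)
    calc |∑ s', Pa p π (k + 1) s a s' * r s'|
        ≤ ∑ s', |Pa p π (k + 1) s a s' * r s'| := Finset.abs_sum_le_sum_abs _ _
      _ ≤ ∑ s', |r s'| := by
          apply Finset.sum_le_sum
          intro s' _
          rw [abs_mul]
          have h1 := Pa_nonneg p π hp0 hπ0 (k + 1) s a s'
          have h2 := Pa_le_one p π hp0 hp1 hπ0 hπ1 (k + 1) s a s'
          calc |Pa p π (k + 1) s a s'| * |r s'| ≤ 1 * |r s'| := by
                apply mul_le_mul_of_nonneg_right _ (abs_nonneg _)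
                rw [abs_of_nonneg h1]; exact h2
            _ = |r s'| := one_mul _
  have hsumg : Summable (fun k : ℕ => γ ^ k * ∑ s', |r s'|) :=
    (summable_geometric_of_lt_one hγ0 hγ1).mul_right _
  have hsum1 : Summable (fun k : ℕ => |γ ^ k * ∑ s', Pa p π (k + 1) s a s' * r s'|) :=
    Summable.of_nonneg_of_le (fun k => abs_nonneg _) hbound hsumg
  refine ⟨hsum1, fun hπa => ?_⟩
  have heq : ∀ k : ℕ, (γ ^ k * ∑ s', Pn p π (k + 1) s s' *
      (hca p π (k + 1) a s s' / π s a) * r s')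
      = γ ^ k * ∑ s', Pa p π (k + 1) s a s' * r s' := by
    intro k
    congr 1
    apply Finset.sum_congr rfl
    intro s' _
    rw [hindsight_pointwise p π hp0 hπ0 k s a s' hπa]
  constructor
  · apply hsum1.congr
    intro k
    rw [heq k]
  · apply tsum_congr
    intro k
    rw [heq k]

end
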